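/- Every swap sequence of length at most K that transforms the initial placement of the constructed token swapping instance into its target placement contains at most |A|/2 + n contrary moves in total. -/

import Mathlib

namespace UnweightedTS

/-- Vertices of the constructed tree: the root, ordering-gadget vertices `ord d`
(distance `d+1` from the root), slot-gadget path vertices `slot i d` (distance `d+1`
from the root in slot gadget `i`), and nooks.  (Coordinates range over all of `ℕ`;
the graph below only has edges between the vertices of the construction, so the
remaining vertices are isolated and carry no tokens.) -/
inductive Vtx (m : ℕ) where
  | root : Vtx m
  | ord : ℕ → Vtx m
  | slot : Fin m → ℕ → Vtx m
  | nook : Fin m → Vtx m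
deriving DecidableEq

/-- Adjacency generator for the tree: `len i` = length of the path of slot gadget `i`,
`lenOrd` = length of the ordering path, `nd` = distance from the root of the path
vertex to which the nook of each slot gadget is attached. -/
def rel {m : ℕ} (len : Fin m → ℕ) (lenOrd nd : ℕ) : Vtx m → Vtx m → Prop
  | .root, .ord d => d = 0 ∧ 0 < lenOrd
  | .ord d, .ord d' => d' = d + 1 ∧ d' < lenOrd
  | .root, .slot i d => d = 0 ∧ 0 < len i
  | .slot i d, .slot i' d' => i = i' ∧ d' = d + 1 ∧ d' < len i
  | .slot i d, .nook i' => i = i' ∧ d + 1 = nd ∧ d < len i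
  | _, _ => False

/-- The constructed tree, as a simple graph. -/
def Tree {m : ℕ} (len : Fin m → ℕ) (lenOrd nd : ℕ) : SimpleGraph (Vtx m) :=
  SimpleGraph.fromRel (rel len lenOrd nd)

/-- Swap the two values `e.1`, `e.2`. -/
def swapV {V : Type*} [DecidableEq V] (e : V × V) (v : V) : V :=
  if v = e.1 then e.2 else if v = e.2 then e.1 else v

/-- Apply a sequence of swaps to a token placement (token ↦ vertex). -/
def applySwaps {T V : Type*} [DecidableEq V] (σ : List (V × V)) (f : T → V) : T → V :=
  σ.foldl (fun g e => fun t => swapV e (g t)) f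

/-- Apply a sequence of star swaps (each given by a leaf) to a placement on the star
with center `none` and leaves `some l`. -/
def starApply {L : Type*} [DecidableEq L] (σ : List L) (f : Option L → Option L) :
    Option L → Option L :=
  σ.foldl (fun g l => fun t => swapV ((none : Option L), some l) (g t)) f

/-- The Star STS instance is a YES instance. -/
def StarSTSYes {L : Type*} [DecidableEq L] (π : Equiv.Perm (Option L)) (σ : List L) : Prop :=
  ∃ σ' : List L, σ'.Sublist σ ∧ starApply σ' id = ⇑π

/-- `k = (mn)^25`, the length of a big segment. -/
def kk (m n : ℕ) : ℕ := (m * n) ^ 25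

/-- `k' = k / n^8`, the length of a padding segment. -/
def kk' (m n : ℕ) : ℕ := kk m n / n ^ 8

variable {m n : ℕ}

/-- `nᵢ`: the number of occurrences of slot `i` in the swap sequence. -/
def cnt (s : Fin n → Fin m) (i : Fin m) : ℕ :=
  (Finset.univ.filter fun j : Fin n => s j = i).card

/-- Length of the ordering path: `nk + nmk'`. -/
def lenOrd (m n : ℕ) : ℕ := n * kk m n + n * m * kk' m n

/-- Length of the path of slot gadget `i`: `nᵢ k + n k'`. -/
def lenSlot (s : Fin n → Fin m) (i : Fin m) : ℕ := cnt s i * kk m n + n * kk' m n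

/-- The non-item tokens: big segments `xⱼ`, `yⱼ` of `k` tokens each, and padding
segments `p_{i,j}`, `q_{i,j}` of `k'` tokens each (in this order of the sum). -/
abbrev NonItem (m n : ℕ) :=
  (Fin n × Fin (kk m n)) ⊕ (Fin n × Fin (kk m n)) ⊕
    (Fin m × Fin n × Fin (kk' m n)) ⊕ (Fin m × Fin n × Fin (kk' m n))

/-- All tokens: item tokens (`Option (Fin m)`, `none` = item 0) and the non-item
tokens. -/
abbrev Tok (m n : ℕ) := Option (Fin m) ⊕ NonItem m n

/-- The constructed tree: ordering path of length `nk + nmk'`, slot path `i` of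
length `nᵢk + nk'`, nooks attached at distance `k` from the root. -/
def TheGraph (s : Fin n → Fin m) : SimpleGraph (Vtx m) :=
  Tree (lenSlot s) (lenOrd m n) (kk m n)

/-- The distance from the root, in slot gadget `i`, at which the block of segment
`q_{i,j}` (preceded by `yⱼ` when `s j = i`) starts in the initial configuration. -/
def offQ (s : Fin n → Fin m) (i : Fin m) (j : Fin n) : ℕ :=
  ∑ j' ∈ Finset.univ.filter (fun j' : Fin n => j'.val < j.val),
    (kk' m n + if s j' = i then kk m n else 0)

/-- The slot occurring next after position `j` in the swap sequence, if any. -/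
def nxt (s : Fin n → Fin m) (j : Fin n) : Option (Fin m) :=
  if h : j.val + 1 < n then some (s ⟨j.val + 1, h⟩) else none

/-- The rank (`0`-based position) of the padding segment `q_{i,j}` among the `m`
padding segments following `yⱼ` in the target configuration of the ordering gadget:
`q_{s_{j+1},j}` first, `q_{s_j,j}` last, and the others in increasing order of `i`. -/
def rho (s : Fin n → Fin m) (i : Fin m) (j : Fin n) : ℕ :=
  if some i = nxt s j then 0
  else if i = s j then m - 1
  else (if (nxt s j).isSome then 1 else 0) +
    (Finset.univ.filter fun i' : Fin m =>
      i'.val < i.val ∧ i' ≠ s j ∧ some i' ≠ nxt s j).card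

/-- The distance from the root, in slot gadget `i`, at which the block of segment
`p_{i,j}` (followed by `xⱼ` when `s j = i`) starts in the target configuration. -/
def tOffP (s : Fin n → Fin m) (i : Fin m) (j : Fin n) : ℕ :=
  ∑ j' ∈ Finset.univ.filter (fun j' : Fin n => j.val < j'.val),
    (kk' m n + if s j' = i then kk m n else 0)

/-- The initial placement of the tokens.  Item `0` is at the root and item `i` at the
nook of slot gadget `i`.  The ordering gadget contains, from the root outward, the
blocks `x₁, p_{·,1}, x₂, p_{·,2}, …, xₙ, p_{·,n}` (the `m` padding blocks after `xⱼ`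
ordered by `rho`); slot gadget `i` contains, from the root outward, the blocks
`q_{i,1},…,q_{i,n}` with `yⱼ` inserted immediately on the root side of `q_{i,j}`
whenever `s j = i`.  Within a segment the coordinate `a` increases away from the root
in slot gadgets and away from the root in the ordering gadget. -/
def initTok (s : Fin n → Fin m) : Tok m n → Vtx m
  | Sum.inl none => .root
  | Sum.inl (some i) => .nook i
  | Sum.inr (Sum.inl (j, a)) => .ord (j.val * (kk m n + m * kk' m n) + a.val)
  | Sum.inr (Sum.inr (Sum.inl (j, a))) => .slot (s j) (offQ s (s j) j + a.val)
  | Sum.inr (Sum.inr (Sum.inr (Sum.inl (i, j, a)))) =>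
      .ord (j.val * (kk m n + m * kk' m n) + kk m n + rho s i j * kk' m n + a.val)
  | Sum.inr (Sum.inr (Sum.inr (Sum.inr (i, j, a)))) =>
      .slot i (offQ s i j + (if s j = i then kk m n else 0) + a.val)

/-- The target placement of the tokens.  Item `o` goes to the position of item `π o`;
the ordering gadget contains, from its far end toward the root, the blocks
`y₁, q_{·,1}, y₂, q_{·,2}, …, yₙ, q_{·,n}` (the `m` padding blocks after `yⱼ` ordered
by `rho`); slot gadget `i` contains, from the root outward, the blocks
`p_{i,n},…,p_{i,1}` with `xⱼ` inserted immediately after (away from the root)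
`p_{i,j}` whenever `s j = i`.  The left-to-right order of the tokens within each
segment is the same as in the initial configuration. -/
def tgtTok (s : Fin n → Fin m) (π : Equiv.Perm (Option (Fin m))) : Tok m n → Vtx m
  | Sum.inl o => (match π o with | none => .root | some i => .nook i)
  | Sum.inr (Sum.inl (j, a)) =>
      .slot (s j) (tOffP s (s j) j + kk' m n + (kk m n - 1 - a.val))
  | Sum.inr (Sum.inr (Sum.inl (j, a))) =>
      .ord (lenOrd m n - 1 - (j.val * (kk m n + m * kk' m n) + a.val))
  | Sum.inr (Sum.inr (Sum.inr (Sum.inl (i, j, a)))) =>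
      .slot i (tOffP s i j + (kk' m n - 1 - a.val))
  | Sum.inr (Sum.inr (Sum.inr (Sum.inr (i, j, a)))) =>
      .ord (lenOrd m n - 1 -
        (j.val * (kk m n + m * kk' m n) + kk m n + rho s i j * kk' m n + a.val))

/-- `d_t`: the tree distance between token `t`'s initial and target vertices. -/
noncomputable def dd (s : Fin n → Fin m) (π : Equiv.Perm (Option (Fin m)))
    (t : Tok m n) : ℕ :=
  (TheGraph s).dist (initTok s t) (tgtTok s π t)

end UnweightedTS

namespace UnweightedTS

variable {m n : ℕ}

/-- The placement after the first `τ` swaps of `σ` (time `τ`). -/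
def placeAt (σ : List (Vtx m × Vtx m)) (f : Tok m n → Vtx m) (τ : ℕ) : Tok m n → Vtx m :=
  applySwaps (σ.take τ) f

/-- `isLeftMove u v` holds when a token moving across an edge from `u` to `v` makes a
*left* move: towards the root within a slot gadget (including out of a nook), or away
from the root within the ordering gadget. -/
def isLeftMove : Vtx m → Vtx m → Bool
  | .root, .ord _ => true
  | .ord _, .root => false
  | .ord d, .ord d' => decide (d < d')
  | .root, .slot _ _ => false
  | .slot _ _, .root => true
  | .slot _ d, .slot _ d' => decide (d' < d)
  | .nook _, .slot _ _ => true
  | .slot _ _, .nook _ => false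
  | _, _ => false

/-- A token of a `y` or `q` segment (initial vertex in a slot gadget). -/
def isSlotTok : Tok m n → Prop
  | Sum.inr (Sum.inr (Sum.inl _)) => True
  | Sum.inr (Sum.inr (Sum.inr (Sum.inr _))) => True
  | _ => False

/-- A token of an `x` or `p` segment (initial vertex in the ordering gadget). -/
def isNonSlotTok : Tok m n → Prop
  | Sum.inr (Sum.inl _) => True
  | Sum.inr (Sum.inr (Sum.inr (Sum.inl _))) => True
  | _ => False

/-- `isContrary t u v` holds when a move of token `t` from `u` to `v` is a *contrary*
move: a right move of a slot token, a right move of an item token, or a left move of a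
non-slot token. -/
def isContrary (t : Tok m n) (u v : Vtx m) : Bool :=
  match t with
  | Sum.inr (Sum.inl _) => isLeftMove u v
  | Sum.inr (Sum.inr (Sum.inr (Sum.inl _))) => isLeftMove u v
  | _ => !isLeftMove u v

/-- `c_t`: the number of contrary moves made by token `t` during the swap sequence
(starting from the placement `f`). -/
def cCount (t : Tok m n) : List (Vtx m × Vtx m) → (Tok m n → Vtx m) → ℕ
  | [], _ => 0
  | e :: rest, f =>
      ((if f t = e.1 ∧ isContrary t e.1 e.2 = true then 1 else 0) +
        (if f t = e.2 ∧ isContrary t e.2 e.1 = true then 1 else 0)) +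
        cCount t rest (fun t' => swapV e (f t'))

/-- Membership of a vertex in a gadget (`none` = the ordering gadget, `some i` = slot
gadget `i`, which includes its nook).  The root belongs to no gadget. -/
def memGadget : Vtx m → Option (Fin m) → Prop
  | .ord _, none => True
  | .slot i _, some i' => i = i'
  | .nook i, some i' => i = i'
  | _, _ => False

/-- The pair of tokens `t₁`, `t₂` is exchanged by the swap at step `idx` of `σ`. -/
def swapsPairAt (σ : List (Vtx m × Vtx m)) (f : Tok m n → Vtx m) (idx : ℕ)
    (t₁ t₂ : Tok m n) : Prop :=
  ∃ h : idx < σ.length,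
    (placeAt σ f idx t₁ = (σ.get ⟨idx, h⟩).1 ∧ placeAt σ f idx t₂ = (σ.get ⟨idx, h⟩).2) ∨
    (placeAt σ f idx t₁ = (σ.get ⟨idx, h⟩).2 ∧ placeAt σ f idx t₂ = (σ.get ⟨idx, h⟩).1)

/-- No pair of tokens swaps with each other more than once during `σ`. -/
def MinimalSeq (σ : List (Vtx m × Vtx m)) (f : Tok m n → Vtx m) : Prop :=
  ∀ (t₁ t₂ : Tok m n) (i₁ i₂ : ℕ), i₁ < i₂ →
    swapsPairAt σ f i₁ t₁ t₂ → ¬ swapsPairAt σ f i₂ t₁ t₂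

/-- The gadget containing a vertex, if any. -/
def gadgetOfV : Vtx m → Option (Fin m)
  | .slot i _ => some i
  | .nook i => some i
  | _ => none

/-- The free item token at time `τ`: the item token that was most recently at the
root (initially item `0`, i.e. `none`). -/
noncomputable def freeAt (σ : List (Vtx m × Vtx m)) (f : Tok m n → Vtx m) :
    ℕ → Option (Fin m)
  | 0 => none
  | τ + 1 =>
      if h : ∃ o : Option (Fin m), placeAt σ f (τ + 1) (Sum.inl o) = Vtx.root then
        h.choose
      else freeAt σ f τ

/-- The exchange sequence `χ` built from the first `τ` steps: each time an item token
that was just in slot gadget `i` becomes the new free item token, `i` is appended. -/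
noncomputable def chiList (σ : List (Vtx m × Vtx m)) (f : Tok m n → Vtx m) :
    ℕ → List (Fin m)
  | 0 => []
  | τ + 1 =>
      chiList σ f τ ++
        (if freeAt σ f (τ + 1) ≠ freeAt σ f τ then
          (match gadgetOfV (placeAt σ f τ (Sum.inl (freeAt σ f (τ + 1)))) with
            | some i => [i]
            | none => [])
        else [])

end UnweightedTS


namespace UnweightedTS

variable {m n : ℕ}

/-- Signed height: negative in slot gadgets, positive in the ordering gadget. -/
def hgt (nd : ℕ) : Vtx m → ℤ
  | .root => 0
  | .ord d => (d : ℤ) + 1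
  | .slot _ d => -((d : ℤ) + 1)
  | .nook _ => -((nd : ℤ) + 1)

lemma adj_hgt {len : Fin m → ℕ} {lenOrd nd : ℕ} {u v : Vtx m}
    (h : (Tree len lenOrd nd).Adj u v) :
    (hgt nd v = hgt nd u + 1 ∧ isLeftMove u v = true) ∨
      (hgt nd v = hgt nd u - 1 ∧ isLeftMove u v = false) := by
  rw [Tree, SimpleGraph.fromRel_adj] at h
  obtain ⟨hne, hrel⟩ := h
  cases u <;> cases v <;>
    simp only [rel, or_self, false_or, or_false] at hrel <;>
    simp only [hgt, isLeftMove, decide_eq_true_eq, decide_eq_false_iff_not,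
      Bool.false_eq_true, Bool.true_eq_false, true_and, and_true, false_and, and_false,
      or_false, false_or] <;>
    first
      | omega
      | (rcases hrel with ⟨_, h1, _⟩ | ⟨_, h1, _⟩ <;> omega)
      | (obtain ⟨_, h1, _⟩ := hrel; omega)
      | (obtain ⟨h1, _⟩ := hrel; omega)

end UnweightedTS

namespace UnweightedTS

variable {m n : ℕ}

/-- Sign of a token: `-1` for non-slot tokens (x and p segments), `+1` otherwise. -/
def sgn : Tok m n → ℤ
  | Sum.inr (Sum.inl _) => -1
  | Sum.inr (Sum.inr (Sum.inr (Sum.inl _))) => -1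
  | _ => 1

lemma swapV_injective {V : Type*} [DecidableEq V] (e : V × V) :
    Function.Injective (swapV e) := by
  have : swapV e = ⇑(Equiv.swap e.1 e.2) := by
    funext v; rw [Equiv.swap_apply_def]; rfl
  rw [this]; exact (Equiv.swap e.1 e.2).injective

lemma step_token {s : Fin n → Fin m} (e : Vtx m × Vtx m) (hadj : (TheGraph s).Adj e.1 e.2)
    (t : Tok m n) (f : Tok m n → Vtx m) :
    sgn t * hgt (kk m n) (swapV e (f t)) +
      2 * (((if f t = e.1 ∧ isContrary t e.1 e.2 = true then 1 else 0) +
           (if f t = e.2 ∧ isContrary t e.2 e.1 = true then 1 else 0) : ℕ) : ℤ)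
    ≤ sgn t * hgt (kk m n) (f t) + (if f t = e.1 ∨ f t = e.2 then 1 else 0) := by
  have hne : e.1 ≠ e.2 := hadj.ne
  have h12 := adj_hgt hadj
  have h21 := adj_hgt hadj.symm
  by_cases h1 : f t = e.1
  · have h2 : f t ≠ e.2 := h1 ▸ hne
    rcases t with o | (⟨j,a⟩ | (⟨j,a⟩ | (⟨i,j,a⟩ | ⟨i,j,a⟩))) <;>
      rcases h12 with ⟨hh, hl⟩ | ⟨hh, hl⟩ <;>
      simp [swapV, h1, h2, hne, isContrary, hl, sgn] <;> omega
  · by_cases h2 : f t = e.2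
    · have h1' : f t ≠ e.1 := h2 ▸ hne.symm
      rcases t with o | (⟨j,a⟩ | (⟨j,a⟩ | (⟨i,j,a⟩ | ⟨i,j,a⟩))) <;>
        rcases h21 with ⟨hh, hl⟩ | ⟨hh, hl⟩ <;>
        simp [swapV, h1', h2, hne.symm, isContrary, hl, sgn] <;> omega
    · simp [swapV, h1, h2]

lemma step_sum {s : Fin n → Fin m} (e : Vtx m × Vtx m) (hadj : (TheGraph s).Adj e.1 e.2)
    (f : Tok m n → Vtx m) (hinj : Function.Injective f) :
    (∑ t : Tok m n, sgn t * hgt (kk m n) (swapV e (f t))) +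
      2 * (∑ t : Tok m n, (((if f t = e.1 ∧ isContrary t e.1 e.2 = true then 1 else 0) +
           (if f t = e.2 ∧ isContrary t e.2 e.1 = true then 1 else 0) : ℕ) : ℤ))
    ≤ (∑ t : Tok m n, sgn t * hgt (kk m n) (f t)) + 2 := by
  have key : ∀ t : Tok m n,
      sgn t * hgt (kk m n) (swapV e (f t)) +
        2 * (((if f t = e.1 ∧ isContrary t e.1 e.2 = true then 1 else 0) +
             (if f t = e.2 ∧ isContrary t e.2 e.1 = true then 1 else 0) : ℕ) : ℤ)
      ≤ sgn t * hgt (kk m n) (f t) + (if f t = e.1 ∨ f t = e.2 then 1 else 0) :=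
    fun t => step_token e hadj t f
  have hsum := Finset.sum_le_sum (fun t (_ : t ∈ Finset.univ) => key t)
  rw [Finset.sum_add_distrib, Finset.sum_add_distrib, ← Finset.mul_sum] at hsum
  have hone : ∀ v : Vtx m, (Finset.univ.filter fun t : Tok m n => f t = v).card ≤ 1 := by
    intro v
    refine Finset.card_le_one.mpr ?_
    intro a ha b hb
    simp only [Finset.mem_filter] at ha hb
    exact hinj (ha.2.trans hb.2.symm)
  have hcard : (∑ t : Tok m n, (if f t = e.1 ∨ f t = e.2 then 1 else 0 : ℤ)) ≤ 2 := by
    rw [Finset.sum_boole, Finset.filter_or]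
    have := Finset.card_union_le (Finset.univ.filter fun t : Tok m n => f t = e.1)
      (Finset.univ.filter fun t : Tok m n => f t = e.2)
    have h1 := hone e.1
    have h2 := hone e.2
    push_cast
    omega
  linarith

end UnweightedTS

namespace UnweightedTS

variable {m n : ℕ}

lemma main_ind {s : Fin n → Fin m} (σ : List (Vtx m × Vtx m)) :
    ∀ f : Tok m n → Vtx m, Function.Injective f →
      (∀ e ∈ σ, (TheGraph s).Adj e.1 e.2) →
      (∑ t : Tok m n, sgn t * hgt (kk m n) (applySwaps σ f t)) +
          2 * (∑ t : Tok m n, (cCount t σ f : ℤ))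
        ≤ (∑ t : Tok m n, sgn t * hgt (kk m n) (f t)) + 2 * σ.length := by
  induction σ with
  | nil => intro f _ _; simp [applySwaps, cCount]
  | cons e rest IH =>
    intro f hinj hedges
    have hadj : (TheGraph s).Adj e.1 e.2 := hedges e List.mem_cons_self
    have hinj' : Function.Injective (fun t => swapV e (f t)) :=
      fun a b h => hinj (swapV_injective e h)
    have IH' := IH (fun t => swapV e (f t)) hinj'
      (fun e' he' => hedges e' (List.mem_cons_of_mem _ he'))
    have HS := step_sum e hadj f hinj
    have happ : applySwaps (e :: rest) f = applySwaps rest (fun t => swapV e (f t)) := rfl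
    have hccsum : (∑ t : Tok m n, (cCount t (e :: rest) f : ℤ)) =
        (∑ t : Tok m n, (((if f t = e.1 ∧ isContrary t e.1 e.2 = true then 1 else 0) +
           (if f t = e.2 ∧ isContrary t e.2 e.1 = true then 1 else 0) : ℕ) : ℤ)) +
        (∑ t : Tok m n, (cCount t rest (fun t' => swapV e (f t')) : ℤ)) := by
      rw [← Finset.sum_add_distrib]
      refine Finset.sum_congr rfl fun t _ => ?_
      show ((cCount t (e :: rest) f : ℕ) : ℤ) = _
      rw [show cCount t (e :: rest) f =
        ((if f t = e.1 ∧ isContrary t e.1 e.2 = true then 1 else 0) +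
           (if f t = e.2 ∧ isContrary t e.2 e.1 = true then 1 else 0)) +
          cCount t rest (fun t' => swapV e (f t')) from rfl]
      push_cast
      ring
    beta_reduce at IH'
    rw [happ, hccsum, List.length_cons]
    push_cast at HS IH' ⊢
    linarith
end UnweightedTS

namespace UnweightedTS

variable {m n : ℕ}

lemma sum_split (j : Fin n) (g : Fin n → ℕ) :
    ∑ j', g j' = (∑ j' ∈ Finset.univ.filter (fun j' : Fin n => j'.val < j.val), g j') + g j +
      ∑ j' ∈ Finset.univ.filter (fun j' : Fin n => j.val < j'.val), g j' := by
  have hu : (Finset.univ.filter (fun j' : Fin n => ¬ j'.val < j.val)) =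
      insert j (Finset.univ.filter (fun j' : Fin n => j.val < j'.val)) := by
    ext x
    simp only [Finset.mem_filter, Finset.mem_univ, true_and, Finset.mem_insert, Fin.ext_iff]
    omega
  rw [← Finset.sum_filter_add_sum_filter_not Finset.univ (fun j' : Fin n => j'.val < j.val) g,
    hu, Finset.sum_insert (by simp)]
  ring

lemma lenSlot_partition (s : Fin n → Fin m) (i : Fin m) (j : Fin n) :
    offQ s i j + ((if s j = i then kk m n else 0) + kk' m n) + tOffP s i j = lenSlot s i := by
  have h1 := sum_split j (fun j' => kk' m n + if s j' = i then kk m n else 0)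
  have h2 : (∑ j' : Fin n, (kk' m n + if s j' = i then kk m n else 0)) =
      n * kk' m n + cnt s i * kk m n := by
    rw [Finset.sum_add_distrib, Finset.sum_const, Finset.card_univ, Fintype.card_fin,
      ← Finset.sum_filter, Finset.sum_const, smul_eq_mul, smul_eq_mul, cnt]
  rw [offQ, tOffP, lenSlot]
  omega

lemma offQ_step (s : Fin n → Fin m) (i : Fin m) {j j' : Fin n} (h : j.val < j'.val) :
    offQ s i j + (kk' m n + if s j = i then kk m n else 0) ≤ offQ s i j' := by
  have hsub : insert j (Finset.univ.filter (fun x : Fin n => x.val < j.val)) ⊆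
      Finset.univ.filter (fun x : Fin n => x.val < j'.val) := by
    intro x
    simp only [Finset.mem_insert, Finset.mem_filter, Finset.mem_univ, true_and, Fin.ext_iff]
    omega
  have := Finset.sum_le_sum_of_subset (f := fun j'' => kk' m n + if s j'' = i then kk m n else 0) hsub
  rw [Finset.sum_insert (by simp)] at this
  beta_reduce at this
  rw [offQ, offQ]
  omega

end UnweightedTS

namespace UnweightedTS

variable {m n : ℕ}

/-- The cardinality appearing in the last branch of `rho`. -/
def Cc (s : Fin n → Fin m) (i : Fin m) (j : Fin n) : ℕ :=
  (Finset.univ.filter fun i' : Fin m =>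
    i'.val < i.val ∧ i' ≠ s j ∧ some i' ≠ nxt s j).card

lemma rho_other_eq {s : Fin n → Fin m} {i : Fin m} {j : Fin n}
    (h1 : some i ≠ nxt s j) (h2 : i ≠ s j) :
    rho s i j = (if (nxt s j).isSome then 1 else 0) + Cc s i j := by
  rw [rho, if_neg h1, if_neg h2, Cc]

lemma nxt_ne {s : Fin n → Fin m}
    (hcons : ∀ (j : Fin n) (h : j.val + 1 < n), s j ≠ s ⟨j.val + 1, h⟩)
    {j : Fin n} {w : Fin m} (hw : nxt s j = some w) : s j ≠ w := by
  rw [nxt] at hw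
  split_ifs at hw with h
  all_goals first
  | (injection hw with hw'; rw [← hw']; exact hcons j h)
  | exact absurd hw (by simp)

lemma rho_other_le {s : Fin n → Fin m} {i : Fin m} {j : Fin n}
    (hcons : ∀ (j : Fin n) (h : j.val + 1 < n), s j ≠ s ⟨j.val + 1, h⟩)
    (h1 : some i ≠ nxt s j) (h2 : i ≠ s j) :
    rho s i j + 2 ≤ m := by
  rw [rho_other_eq h1 h2]
  rcases hw : nxt s j with _ | w
  · have hm : 2 ≤ m := by
      have := i.isLt; have := (s j).isLt
      have : i.val ≠ (s j).val := fun hc => h2 (Fin.ext hc)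
      omega
    have hsub : (Finset.univ.filter fun i' : Fin m =>
        i'.val < i.val ∧ i' ≠ s j ∧ some i' ≠ nxt s j) ⊆
        (Finset.univ.erase (s j)).erase i := by
      intro x hx
      simp only [Finset.mem_filter, Finset.mem_univ, true_and] at hx
      refine Finset.mem_erase.mpr ⟨fun hc => ?_, Finset.mem_erase.mpr ⟨hx.2.1, Finset.mem_univ x⟩⟩
      subst hc; omega
    have hcard : ((Finset.univ.erase (s j)).erase i).card = m - 2 := by
      rw [Finset.card_erase_of_mem (Finset.mem_erase.mpr ⟨h2, Finset.mem_univ i⟩),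
        Finset.card_erase_of_mem (Finset.mem_univ (s j)), Finset.card_univ, Fintype.card_fin]
      omega
    have := Finset.card_le_card hsub
    rw [hcard] at this
    simp only [Cc]
    rw [hw] at this ⊢
    simp only [Option.isSome_none, Option.isSome_some, Bool.false_eq_true, if_false, if_true]
    omega
  · have hws : s j ≠ w := nxt_ne hcons hw
    have hiw : i ≠ w := fun hc => h1 (by rw [hc, hw])
    have hm : 3 ≤ m := by
      have := i.isLt; have := (s j).isLt; have := w.isLt
      have h1' : i.val ≠ (s j).val := fun hc => h2 (Fin.ext hc)
      have h2' : i.val ≠ w.val := fun hc => hiw (Fin.ext hc)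
      have h3' : (s j).val ≠ w.val := fun hc => hws (Fin.ext hc)
      omega
    have hsub : (Finset.univ.filter fun i' : Fin m =>
        i'.val < i.val ∧ i' ≠ s j ∧ some i' ≠ nxt s j) ⊆
        ((Finset.univ.erase (s j)).erase w).erase i := by
      intro x hx
      simp only [Finset.mem_filter, Finset.mem_univ, true_and, hw] at hx
      refine Finset.mem_erase.mpr ⟨fun hc => ?_, Finset.mem_erase.mpr
        ⟨fun hc => hx.2.2 (by rw [hc]), Finset.mem_erase.mpr ⟨hx.2.1, Finset.mem_univ x⟩⟩⟩
      subst hc; omega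
    have hcard : (((Finset.univ.erase (s j)).erase w).erase i).card = m - 3 := by
      rw [Finset.card_erase_of_mem (Finset.mem_erase.mpr ⟨hiw, Finset.mem_erase.mpr
          ⟨h2, Finset.mem_univ i⟩⟩),
        Finset.card_erase_of_mem (Finset.mem_erase.mpr ⟨hws.symm, Finset.mem_univ w⟩),
        Finset.card_erase_of_mem (Finset.mem_univ (s j)), Finset.card_univ, Fintype.card_fin]
      omega
    have := Finset.card_le_card hsub
    rw [hcard] at this
    simp only [Cc]
    rw [hw] at this ⊢
    simp only [Option.isSome_none, Option.isSome_some, Bool.false_eq_true, if_false, if_true]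
    omega

lemma rho_lt {s : Fin n → Fin m} {j : Fin n}
    (hcons : ∀ (j : Fin n) (h : j.val + 1 < n), s j ≠ s ⟨j.val + 1, h⟩)
    (i : Fin m) : rho s i j < m := by
  have hm := i.pos
  by_cases h1 : some i = nxt s j
  · rw [rho, if_pos h1]; omega
  · by_cases h2 : i = s j
    · rw [rho, if_neg h1, if_pos h2]; omega
    · have := rho_other_le hcons h1 h2; omega

lemma Cc_lt {s : Fin n → Fin m} {i i' : Fin m} {j : Fin n}
    (h1 : some i ≠ nxt s j) (h2 : i ≠ s j) (hlt : i.val < i'.val) :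
    Cc s i j < Cc s i' j := by
  have hsub : (Finset.univ.filter fun i'' : Fin m =>
      i''.val < i.val ∧ i'' ≠ s j ∧ some i'' ≠ nxt s j) ⊆
      Finset.univ.filter fun i'' : Fin m =>
      i''.val < i'.val ∧ i'' ≠ s j ∧ some i'' ≠ nxt s j := by
    intro x hx
    simp only [Finset.mem_filter, Finset.mem_univ, true_and] at hx ⊢
    exact ⟨by omega, hx.2⟩
  refine Finset.card_lt_card (((Finset.ssubset_iff_of_subset hsub).mpr ?_))
  refine ⟨i, ?_, ?_⟩
  · simp only [Finset.mem_filter, Finset.mem_univ, true_and]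
    exact ⟨hlt, h2, h1⟩
  · simp only [Finset.mem_filter, Finset.mem_univ, true_and]
    intro hc
    omega

lemma rho_inj {s : Fin n → Fin m} {i i' : Fin m} {j : Fin n}
    (hcons : ∀ (j : Fin n) (h : j.val + 1 < n), s j ≠ s ⟨j.val + 1, h⟩)
    (hne : i ≠ i') : rho s i j ≠ rho s i' j := by
  have hm2 : 2 ≤ m := by
    have := i.isLt; have := i'.isLt
    have : i.val ≠ i'.val := fun hc => hne (Fin.ext hc)
    omega
  -- helper facts
  have key : ∀ a b : Fin m, a ≠ b → rho s a j = rho s b j → False := by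
    intro a b hab heq
    by_cases ha1 : some a = nxt s j
    · rw [rho, if_pos ha1] at heq
      by_cases hb1 : some b = nxt s j
      · exact hab (Option.some_injective _ (ha1.trans hb1.symm))
      · by_cases hb2 : b = s j
        · rw [rho, if_neg hb1, if_pos hb2] at heq; omega
        · rw [rho_other_eq hb1 hb2] at heq
          have : (nxt s j).isSome = true := by rw [← ha1]; rfl
          rw [if_pos this] at heq; omega
    · by_cases ha2 : a = s j
      · rw [rho, if_neg ha1, if_pos ha2] at heq
        by_cases hb1 : some b = nxt s j
        · rw [rho, if_pos hb1] at heq; omega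
        · by_cases hb2 : b = s j
          · exact hab (ha2.trans hb2.symm)
          · rw [rho_other_eq hb1 hb2] at heq
            have := rho_other_le hcons hb1 hb2
            rw [rho_other_eq hb1 hb2] at this
            omega
      · by_cases hb1 : some b = nxt s j
        · rw [rho_other_eq ha1 ha2] at heq
          rw [rho, if_pos hb1] at heq
          have : (nxt s j).isSome = true := by rw [← hb1]; rfl
          rw [if_pos this] at heq; omega
        · by_cases hb2 : b = s j
          · rw [rho_other_eq ha1 ha2] at heq
            rw [rho, if_neg hb1, if_pos hb2] at heq
            have := rho_other_le hcons ha1 ha2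
            rw [rho_other_eq ha1 ha2] at this
            omega
          · rw [rho_other_eq ha1 ha2, rho_other_eq hb1 hb2] at heq
            rcases lt_trichotomy a.val b.val with h | h | h
            · have := Cc_lt ha1 ha2 h; omega
            · exact hab (Fin.ext h)
            · have := Cc_lt hb1 hb2 h; omega
  exact fun heq => key i i' hne heq

end UnweightedTS

namespace UnweightedTS

variable {m n : ℕ}

lemma block_inj {B a a' j j' : ℕ} (ha : a < B) (ha' : a' < B)
    (h : j * B + a = j' * B + a') : j = j' ∧ a = a' := by
  rcases lt_trichotomy j j' with hlt | he | hlt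
  · have h2 : (j + 1) * B ≤ j' * B := mul_le_mul_left (Nat.succ_le_of_lt hlt) B
    rw [add_mul, one_mul] at h2
    omega
  · subst he; omega
  · have h2 : (j' + 1) * B ≤ j * B := mul_le_mul_left (Nat.succ_le_of_lt hlt) B
    rw [add_mul, one_mul] at h2
    omega

lemma rho_mul_bound {s : Fin n → Fin m}
    (hcons : ∀ (j : Fin n) (h : j.val + 1 < n), s j ≠ s ⟨j.val + 1, h⟩)
    (i : Fin m) (j : Fin n) (c : Fin (kk' m n)) :
    rho s i j * kk' m n + c.val < m * kk' m n := by
  have h1 : rho s i j + 1 ≤ m := rho_lt hcons i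
  have h2 : (rho s i j + 1) * kk' m n ≤ m * kk' m n := mul_le_mul_left h1 _
  rw [add_mul, one_mul] at h2
  have := c.isLt
  omega

end UnweightedTS

namespace UnweightedTS

variable {m n : ℕ}

lemma initTok_inj {s : Fin n → Fin m}
    (hcons : ∀ (j : Fin n) (h : j.val + 1 < n), s j ≠ s ⟨j.val + 1, h⟩) :
    Function.Injective (initTok s) := by
  intro t1 t2 heq
  rcases t1 with (_ | i1) | ⟨j1, a1⟩ | ⟨j1, a1⟩ | ⟨i1, j1, a1⟩ | ⟨i1, j1, a1⟩ <;>
    rcases t2 with (_ | i2) | ⟨j2, a2⟩ | ⟨j2, a2⟩ | ⟨i2, j2, a2⟩ | ⟨i2, j2, a2⟩ <;>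
    simp only [initTok] at heq <;>
    first
      | rfl
      | (simp at heq; done)
      | (simp only [Vtx.nook.injEq] at heq; subst heq; rfl)
      | skip
  -- x‑x
  case _ =>
    simp only [Vtx.ord.injEq] at heq
    have hb1 : a1.val < kk m n + m * kk' m n := by have := a1.isLt; omega
    have hb2 : a2.val < kk m n + m * kk' m n := by have := a2.isLt; omega
    obtain ⟨hj, ha⟩ := block_inj hb1 hb2 heq
    rw [Fin.ext hj, Fin.ext ha]
  -- x‑p
  case _ =>
    simp only [Vtx.ord.injEq] at heq
    rw [add_assoc, add_assoc] at heq
    have hb1 : a1.val < kk m n + m * kk' m n := by have := a1.isLt; omega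
    have hb2 : kk m n + (rho s i2 j2 * kk' m n + a2.val) < kk m n + m * kk' m n := by
      have := rho_mul_bound hcons i2 j2 a2; omega
    obtain ⟨hj, ha⟩ := block_inj hb1 hb2 heq
    have := a1.isLt
    omega
  -- y‑y
  case _ =>
    simp only [Vtx.slot.injEq] at heq
    obtain ⟨hi, hco⟩ := heq
    have hj : j1 = j2 := by
      rcases lt_trichotomy j1.val j2.val with h | h | h
      · have := offQ_step s (s j2) (j := j1) (j' := j2) h
        rw [← hi, if_pos rfl] at this
        rw [← hi] at hco
        have := a1.isLt
        omega
      · exact Fin.ext h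
      · have hs := offQ_step s (s j2) (j := j2) (j' := j1) h
        rw [← hi] at hs hco
        rw [if_pos rfl] at hs
        have := a2.isLt
        omega
    subst hj
    rw [← hi] at hco
    have ha : a1 = a2 := Fin.ext (by omega)
    rw [ha]
  -- y‑q
  case _ =>
    simp only [Vtx.slot.injEq] at heq
    obtain ⟨hi, hco⟩ := heq
    exfalso
    rcases lt_trichotomy j1.val j2.val with h | h | h
    · have hs := offQ_step s i2 (j := j1) (j' := j2) h
      rw [← hi] at hs hco
      rw [if_pos rfl] at hs
      have := a1.isLt
      omega
    · have hj : j1 = j2 := Fin.ext h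
      subst hj
      rw [← hi] at hco
      rw [if_pos rfl] at hco
      have := a1.isLt
      omega
    · have hs := offQ_step s i2 (j := j2) (j' := j1) h
      rw [← hi] at hs hco
      have := a2.isLt
      omega
  -- p‑x
  case _ =>
    simp only [Vtx.ord.injEq] at heq
    rw [add_assoc, add_assoc] at heq
    have hb2 : a2.val < kk m n + m * kk' m n := by have := a2.isLt; omega
    have hb1 : kk m n + (rho s i1 j1 * kk' m n + a1.val) < kk m n + m * kk' m n := by
      have := rho_mul_bound hcons i1 j1 a1; omega
    obtain ⟨hj, ha⟩ := block_inj hb1 hb2 heq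
    have := a2.isLt
    omega
  -- p‑p
  case _ =>
    simp only [Vtx.ord.injEq] at heq
    have heq' : j1.val * (kk m n + m * kk' m n) + (kk m n + (rho s i1 j1 * kk' m n + a1.val)) =
        j2.val * (kk m n + m * kk' m n) + (kk m n + (rho s i2 j2 * kk' m n + a2.val)) := by
      omega
    have hb1 : kk m n + (rho s i1 j1 * kk' m n + a1.val) < kk m n + m * kk' m n := by
      have := rho_mul_bound hcons i1 j1 a1; omega
    have hb2 : kk m n + (rho s i2 j2 * kk' m n + a2.val) < kk m n + m * kk' m n := by
      have := rho_mul_bound hcons i2 j2 a2; omega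
    obtain ⟨hj, ha⟩ := block_inj hb1 hb2 heq'
    have hj' : j1 = j2 := Fin.ext hj
    subst hj'
    have ha' : rho s i1 j1 * kk' m n + a1.val = rho s i2 j1 * kk' m n + a2.val := by omega
    obtain ⟨hr, hav⟩ := block_inj a1.isLt a2.isLt ha'
    have hi : i1 = i2 := by
      by_contra hne
      exact rho_inj hcons hne hr
    rw [hi, Fin.ext hav]
  -- q‑y
  case _ =>
    simp only [Vtx.slot.injEq] at heq
    obtain ⟨hi, hco⟩ := heq
    exfalso
    rcases lt_trichotomy j1.val j2.val with h | h | h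
    · have hs := offQ_step s i1 (j := j1) (j' := j2) h
      rw [← hi] at hco
      have := a1.isLt
      omega
    · have hj : j1 = j2 := Fin.ext h
      subst hj
      rw [hi] at hco
      rw [if_pos rfl] at hco
      have := a2.isLt
      omega
    · have hs := offQ_step s i1 (j := j2) (j' := j1) h
      rw [← hi] at hco
      rw [if_pos (by rw [hi])] at hs
      have := a2.isLt
      omega
  -- q‑q
  case _ =>
    simp only [Vtx.slot.injEq] at heq
    obtain ⟨hi, hco⟩ := heq
    subst hi
    have hj : j1 = j2 := by
      rcases lt_trichotomy j1.val j2.val with h | h | h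
      · have hs := offQ_step s i1 (j := j1) (j' := j2) h
        have := a1.isLt
        omega
      · exact Fin.ext h
      · have hs := offQ_step s i1 (j := j2) (j' := j1) h
        have := a2.isLt
        omega
    subst hj
    have ha : a1 = a2 := Fin.ext (by omega)
    rw [ha]

end UnweightedTS

namespace UnweightedTS

variable {m n : ℕ}

lemma lenOrd_eq (m n : ℕ) : lenOrd m n = n * (kk m n + m * kk' m n) := by
  rw [lenOrd]; ring

lemma walk_ord {s : Fin n → Fin m} (d : ℕ) :
    d < lenOrd m n →
      ∃ w : (TheGraph s).Walk Vtx.root (Vtx.ord d), w.length = d + 1 := by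
  induction d with
  | zero =>
    intro hd
    have hadj : (TheGraph s).Adj Vtx.root (Vtx.ord 0) := by
      rw [TheGraph, Tree, SimpleGraph.fromRel_adj]
      exact ⟨by simp, Or.inl ⟨rfl, hd⟩⟩
    exact ⟨SimpleGraph.Walk.cons hadj SimpleGraph.Walk.nil, rfl⟩
  | succ d ih =>
    intro hd
    obtain ⟨w, hw⟩ := ih (by omega)
    have hadj : (TheGraph s).Adj (Vtx.ord d) (Vtx.ord (d + 1)) := by
      rw [TheGraph, Tree, SimpleGraph.fromRel_adj]
      exact ⟨by simp, Or.inl ⟨rfl, hd⟩⟩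
    exact ⟨w.concat hadj, by rw [SimpleGraph.Walk.length_concat, hw]⟩

lemma walk_slot {s : Fin n → Fin m} (i : Fin m) (d : ℕ) :
    d < lenSlot s i →
      ∃ w : (TheGraph s).Walk Vtx.root (Vtx.slot i d), w.length = d + 1 := by
  induction d with
  | zero =>
    intro hd
    have hadj : (TheGraph s).Adj Vtx.root (Vtx.slot i 0) := by
      rw [TheGraph, Tree, SimpleGraph.fromRel_adj]
      exact ⟨by simp, Or.inl ⟨rfl, hd⟩⟩
    exact ⟨SimpleGraph.Walk.cons hadj SimpleGraph.Walk.nil, rfl⟩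
  | succ d ih =>
    intro hd
    obtain ⟨w, hw⟩ := ih (by omega)
    have hadj : (TheGraph s).Adj (Vtx.slot i d) (Vtx.slot i (d + 1)) := by
      rw [TheGraph, Tree, SimpleGraph.fromRel_adj]
      exact ⟨by simp, Or.inl ⟨rfl, rfl, hd⟩⟩
    exact ⟨w.concat hadj, by rw [SimpleGraph.Walk.length_concat, hw]⟩

lemma dist_slot_ord {s : Fin n → Fin m} {i : Fin m} {d d' : ℕ}
    (h1 : d < lenSlot s i) (h2 : d' < lenOrd m n) :
    (TheGraph s).dist (Vtx.slot i d) (Vtx.ord d') ≤ (d + 1) + (d' + 1) := by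
  obtain ⟨w1, hw1⟩ := walk_slot (s := s) i d h1
  obtain ⟨w2, hw2⟩ := walk_ord (s := s) d' h2
  refine le_trans (SimpleGraph.dist_le (w1.reverse.append w2)) ?_
  rw [SimpleGraph.Walk.length_append, SimpleGraph.Walk.length_reverse, hw1, hw2]

lemma dist_ord_slot {s : Fin n → Fin m} {i : Fin m} {d d' : ℕ}
    (h1 : d < lenSlot s i) (h2 : d' < lenOrd m n) :
    (TheGraph s).dist (Vtx.ord d') (Vtx.slot i d) ≤ (d + 1) + (d' + 1) := by
  rw [SimpleGraph.dist_comm]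
  exact dist_slot_ord h1 h2

end UnweightedTS

namespace UnweightedTS

variable {m n : ℕ}

lemma lenOrd_pos (j : Fin n) (a : Fin (kk m n)) : 0 < lenOrd m n := by
  have h1 : 1 * 1 ≤ n * (kk m n + m * kk' m n) :=
    Nat.mul_le_mul j.pos (by have := a.pos; omega)
  rw [lenOrd_eq]; omega

lemma jB_le (j : Fin n) : j.val * (kk m n + m * kk' m n) + (kk m n + m * kk' m n) ≤
    lenOrd m n := by
  have := mul_le_mul_left (Nat.succ_le_of_lt j.isLt) (kk m n + m * kk' m n)
  rw [Nat.succ_eq_add_one, add_mul, one_mul] at this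
  rw [lenOrd_eq]
  exact this

lemma dd_le {s : Fin n → Fin m} {π : Equiv.Perm (Option (Fin m))}
    (hcons : ∀ (j : Fin n) (h : j.val + 1 < n), s j ≠ s ⟨j.val + 1, h⟩)
    (t : NonItem m n) :
    (dd s π (Sum.inr t) : ℤ) ≤ sgn (Sum.inr t) *
      (hgt (kk m n) (tgtTok s π (Sum.inr t)) - hgt (kk m n) (initTok s (Sum.inr t))) := by
  rcases t with ⟨j, a⟩ | ⟨j, a⟩ | ⟨i, j, a⟩ | ⟨i, j, a⟩
  · -- x token: ordering gadget → slot gadget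
    have hB1 : j.val * (kk m n + m * kk' m n) + a.val < lenOrd m n := by
      have := jB_le (m := m) (n := n) j; have := a.isLt; omega
    have hB2 : tOffP s (s j) j + kk' m n + (kk m n - 1 - a.val) < lenSlot s (s j) := by
      have hpart := lenSlot_partition s (s j) j
      rw [if_pos rfl] at hpart
      have := a.pos
      omega
    have hd := dist_ord_slot (s := s) hB2 hB1
    simp only [dd, initTok, tgtTok, sgn, hgt]
    refine le_trans (Nat.cast_le.mpr hd) (le_of_eq ?_)
    push_cast
    ring
  · -- y token: slot gadget → ordering gadget
    have hB1 : offQ s (s j) j + a.val < lenSlot s (s j) := by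
      have hpart := lenSlot_partition s (s j) j
      rw [if_pos rfl] at hpart
      have := a.isLt
      omega
    have hB2 : lenOrd m n - 1 - (j.val * (kk m n + m * kk' m n) + a.val) < lenOrd m n := by
      have := lenOrd_pos j a; omega
    have hd := dist_slot_ord (s := s) hB1 hB2
    simp only [dd, initTok, tgtTok, sgn, hgt]
    refine le_trans (Nat.cast_le.mpr hd) (le_of_eq ?_)
    push_cast
    ring
  · -- p token: ordering gadget → slot gadget
    have hB1 : j.val * (kk m n + m * kk' m n) + kk m n + rho s i j * kk' m n + a.val <
        lenOrd m n := by
      have := jB_le (m := m) (n := n) j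
      have := rho_mul_bound hcons i j a
      omega
    have hB2 : tOffP s i j + (kk' m n - 1 - a.val) < lenSlot s i := by
      have hpart := lenSlot_partition s i j
      have := a.pos
      omega
    have hd := dist_ord_slot (s := s) hB2 hB1
    simp only [dd, initTok, tgtTok, sgn, hgt]
    refine le_trans (Nat.cast_le.mpr hd) (le_of_eq ?_)
    push_cast
    ring
  · -- q token: slot gadget → ordering gadget
    have hB1 : offQ s i j + (if s j = i then kk m n else 0) + a.val < lenSlot s i := by
      have hpart := lenSlot_partition s i j
      have := a.isLt
      omega
    have hB2 : lenOrd m n - 1 -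
        (j.val * (kk m n + m * kk' m n) + kk m n + rho s i j * kk' m n + a.val) <
        lenOrd m n := by
      have h1 : 1 * 1 ≤ n * (kk m n + m * kk' m n) := by
        refine Nat.mul_le_mul j.pos ?_
        have h2 : 1 * 1 ≤ m * kk' m n := Nat.mul_le_mul i.pos a.pos
        omega
      rw [lenOrd_eq]; omega
    have hd := dist_slot_ord (s := s) hB1 hB2
    simp only [dd, initTok, tgtTok, sgn, hgt]
    refine le_trans (Nat.cast_le.mpr hd) (le_of_eq ?_)
    push_cast
    ring

end UnweightedTS

namespace UnweightedTS

variable {m n : ℕ}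

lemma hgt_item {s : Fin n → Fin m} {π : Equiv.Perm (Option (Fin m))}
    (hπ0 : π none = none) (o : Option (Fin m)) :
    hgt (kk m n) (tgtTok s π (Sum.inl o)) = hgt (kk m n) (initTok s (Sum.inl o)) := by
  cases o with
  | none => simp only [tgtTok, initTok, hπ0]
  | some i =>
    rcases hi : π (some i) with _ | i'
    · exact absurd (π.injective (hπ0.trans hi.symm)) (by simp)
    · simp only [tgtTok, initTok, hi]
      rfl

end UnweightedTS
namespace UnweightedTS

/-!
STATEMENT 7: Every swap sequence of length at most `K = H + n` transforming the
initial placement of the constructed token swapping instance into its target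
placement contains at most `|A|/2 + n` contrary moves in total.  (Both the length
bound and the conclusion are stated in the equivalent doubled forms
`2·σ.length ≤ Σ_{t∈A}(d_t+1) + 2n` and `2·Σ_t c_t ≤ |A| + 2n`.)
-/
theorem contrary_moves_bound {m n : ℕ}
    (s : Fin n → Fin m) (π : Equiv.Perm (Option (Fin m)))
    (hπ0 : π none = none)
    (hocc : ∀ i : Fin m, ∃ j, s j = i)
    (hcons : ∀ (j : Fin n) (h : j.val + 1 < n), s j ≠ s ⟨j.val + 1, h⟩)
    (σ : List (Vtx m × Vtx m))
    (hedges : ∀ e ∈ σ, (TheGraph s).Adj e.1 e.2)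
    (hsol : applySwaps σ (initTok s) = tgtTok s π)
    (hlen : 2 * σ.length ≤ (∑ t : NonItem m n, (dd s π (Sum.inr t) + 1)) + 2 * n) :
    2 * (∑ t : Tok m n, cCount t σ (initTok s)) ≤ Fintype.card (NonItem m n) + 2 * n := by
  have hinj := initTok_inj hcons
  have M := main_ind (s := s) σ (initTok s) hinj hedges
  rw [hsol] at M
  -- split the two potential sums by token type
  rw [Fintype.sum_sum_type (fun t : Tok m n => sgn t * hgt (kk m n) (tgtTok s π t)),
    Fintype.sum_sum_type (fun t : Tok m n => sgn t * hgt (kk m n) (initTok s t))] at M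
  have hitemsum :
      (∑ o : Option (Fin m), sgn (n := n) (Sum.inl o) * hgt (kk m n) (tgtTok s π (Sum.inl o))) =
      (∑ o : Option (Fin m), sgn (n := n) (Sum.inl o) * hgt (kk m n) (initTok s (Sum.inl o))) :=
    Finset.sum_congr rfl fun o _ => by rw [hgt_item hπ0 o]
  have hDD : (∑ t : NonItem m n, (dd s π (Sum.inr t) : ℤ)) ≤
      (∑ t : NonItem m n, sgn (Sum.inr t) * hgt (kk m n) (tgtTok s π (Sum.inr t))) -
      (∑ t : NonItem m n, sgn (Sum.inr t) * hgt (kk m n) (initTok s (Sum.inr t))) := by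
    rw [← Finset.sum_sub_distrib]
    refine Finset.sum_le_sum fun t _ => ?_
    have h := dd_le (π := π) hcons t
    rw [mul_sub] at h
    exact h
  have hlen' : 2 * (σ.length : ℤ) ≤
      (∑ t : NonItem m n, ((dd s π (Sum.inr t) : ℤ) + 1)) + 2 * n := by
    exact_mod_cast hlen
  have hcard : (∑ _t : NonItem m n, (1 : ℤ)) = (Fintype.card (NonItem m n) : ℤ) := by
    rw [Finset.sum_const, Finset.card_univ, nsmul_eq_mul, mul_one]
  rw [Finset.sum_add_distrib, hcard] at hlen'
  have final : 2 * (∑ t : Tok m n, (cCount t σ (initTok s) : ℤ)) ≤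
      (Fintype.card (NonItem m n) : ℤ) + 2 * n := by
    linarith
  exact_mod_cast final


end UnweightedTS
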